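/- Let K be an imaginary quadratic field of discriminant d_K, and let Q(x,y) = ax² + bxy + cy² be a primitive positive definite binary quadratic form of discriminant b² − 4ac = d_K. Let ω_Q = (−b + √d_K)/(2a) be the root of Q(x,1) in the upper half-plane. Then the lattice ℤω_Q + ℤ is a fractional ideal of K with absolute norm 1/a. -/

import Mathlib

open NumberField
open scoped nonZeroDivisors

/-- Let `K` be an imaginary quadratic field of discriminant `d_K`,
and `Q = ax² + bxy + cy²` a primitive positive definite binary quadratic form of
discriminant `d_K`, with root `ω_Q ∈ K` lying in the upper half-plane (via a complex
embedding `ι`).  Then the lattice `ℤω_Q + ℤ` is a fractional ideal of `K` with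
absolute norm `1/a`. -/
theorem stmt0 (K : Type*) [Field K] [NumberField K]
    (hdeg : Module.finrank ℚ K = 2) (hneg : NumberField.discr K < 0)
    (ι : K →+* ℂ)
    (a b c : ℤ) (hpos : 0 < a)
    (hprim : Int.gcd a (Int.gcd b c) = 1)
    (hdisc : b ^ 2 - 4 * a * c = NumberField.discr K)
    (ω : K) (hroot : (a : K) * ω ^ 2 + (b : K) * ω + (c : K) = 0)
    (him : 0 < (ι ω).im) :
    ∃ I : FractionalIdeal (𝓞 K)⁰ K,
      ((I : Submodule (𝓞 K) K) : Set K) = (Submodule.span ℤ {ω, (1 : K)} : Set K) ∧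
      FractionalIdeal.absNorm I = 1 / (a : ℚ) := by
  classical
  have haK : (a : K) ≠ 0 := Int.cast_ne_zero.mpr hpos.ne'
  set θ : K := (a : K) * ω with hθdef
  have hθeq : θ ^ 2 + (b : K) * θ + ((a : K) * (c : K)) = 0 := by
    rw [hθdef]; linear_combination (a : K) * hroot
  -- θ is integral over ℤ
  have hθint : IsIntegral ℤ θ := by
    refine ⟨Polynomial.X ^ 2 + Polynomial.C b * Polynomial.X + Polynomial.C (a * c), ?_, ?_⟩
    · monicity!
    · simp only [Polynomial.eval₂_add, Polynomial.eval₂_mul, Polynomial.eval₂_pow,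
        Polynomial.eval₂_X, Polynomial.eval₂_C]
      simp only [eq_intCast]
      push_cast
      linear_combination hθeq
  set θO : 𝓞 K := ⟨θ, hθint⟩ with hθOdef
  have hcoeθ : (algebraMap (𝓞 K) K) θO = θ := rfl
  -- imaginary part of θ is positive
  have himθ : 0 < (ι θ).im := by
    have h1 : ι θ = (a : ℂ) * ι ω := by rw [hθdef, map_mul, map_intCast]
    rw [h1, Complex.mul_im]
    simp only [Complex.intCast_im, Complex.intCast_re, zero_mul, add_zero]
    exact mul_pos (by exact_mod_cast hpos) him
  -- ![1, θ] is linearly independent over ℚ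
  have hQlin : LinearIndependent ℚ ![(1 : K), θ] := by
    rw [linearIndependent_fin2]
    constructor
    · intro h
      simp only [Matrix.cons_val_one, Matrix.head_cons, Matrix.cons_val_zero] at h
      rw [h] at himθ; simp at himθ
    · intro s hs
      simp only [Matrix.cons_val_one, Matrix.head_cons, Matrix.cons_val_zero] at hs
      have h2 : ι (s • θ) = (s : ℂ) * ι θ := by
        rw [Algebra.smul_def, map_mul,
          show ι ((algebraMap ℚ K) s) = (s : ℂ) from by
            rw [← RingHom.comp_apply, eq_ratCast]]
      have h3 : (s : ℝ) * (ι θ).im = 0 := by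
        have := congrArg (fun z => (ι z).im) hs
        simp only [h2, map_one, Complex.one_im, Complex.mul_im, Complex.ratCast_im,
          Complex.ratCast_re, zero_mul, add_zero] at this
        exact this
      rcases mul_eq_zero.mp h3 with h4 | h4
      · have hs0 : s = 0 := by exact_mod_cast h4
        rw [hs0, zero_smul] at hs
        exact one_ne_zero hs.symm
      · exact himθ.ne' h4
  have hcard2 : Fintype.card (Fin 2) = Module.finrank ℚ K := by simp [hdeg]
  let B : Module.Basis (Fin 2) ℚ K := basisOfLinearIndependentOfCardEqFinrank hQlin hcard2
  have hB : ⇑B = ![(1 : K), θ] := coe_basisOfLinearIndependentOfCardEqFinrank hQlin hcard2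
  have hB0 : B 0 = 1 := by rw [hB]; rfl
  have hB1 : B 1 = θ := by rw [hB]; rfl
  have hrepr : ∀ (p q : ℚ) (i : Fin 2), B.repr (p • (1 : K) + q • θ) i = ![p, q] i := by
    intro p q i
    rw [← hB0, ← hB1, map_add, map_smul, map_smul, B.repr_self, B.repr_self]
    fin_cases i <;> simp
  -- traces
  have tr1 : Algebra.trace ℚ K 1 = 2 := by
    have h1 := Algebra.trace_algebraMap (S := K) (1 : ℚ)
    rw [map_one] at h1
    rw [h1, hdeg]; simp
  have hθsq : θ ^ 2 = (-(b : ℚ)) • θ + (-((a : ℚ) * (c : ℚ))) • (1 : K) := by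
    rw [Algebra.smul_def, Algebra.smul_def, eq_ratCast (algebraMap ℚ K),
      eq_ratCast (algebraMap ℚ K)]
    push_cast
    linear_combination hθeq
  have trθ : Algebra.trace ℚ K θ = -(b : ℚ) := by
    rw [Algebra.trace_eq_matrix_trace B, Matrix.trace_fin_two,
      Algebra.leftMulMatrix_eq_repr_mul, Algebra.leftMulMatrix_eq_repr_mul]
    have e0 : θ * B 0 = (0 : ℚ) • (1 : K) + (1 : ℚ) • θ := by rw [hB0]; simp
    have e1 : θ * B 1 = (-((a : ℚ) * (c : ℚ))) • (1 : K) + (-(b : ℚ)) • θ := by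
      rw [hB1, ← pow_two, hθsq]; ring
    rw [e0, e1, hrepr, hrepr]
    simp
  have trθ2 : Algebra.trace ℚ K (θ ^ 2) = (b : ℚ) ^ 2 - 2 * ((a : ℚ) * (c : ℚ)) := by
    rw [hθsq, map_add, map_smul, map_smul, trθ, tr1]
    simp only [smul_eq_mul]
    ring
  -- discriminant of the pair (θ, 1)
  have hdiscr_pair : Algebra.discr ℚ ![θ, (1 : K)] = (b : ℚ) ^ 2 - 4 * (a : ℚ) * (c : ℚ) := by
    rw [Algebra.discr_def, Matrix.det_fin_two]
    simp only [Algebra.traceMatrix_apply, Algebra.traceForm_apply, Matrix.cons_val_zero,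
      Matrix.cons_val_one, Matrix.head_cons]
    rw [show θ * θ = θ ^ 2 by ring, mul_one, one_mul, mul_one, trθ2, tr1, trθ]
    ring
  -- integral basis re-indexed by Fin 2
  have hcardO : Fintype.card (Module.Free.ChooseBasisIndex ℤ (𝓞 K)) = 2 := by
    rw [← Module.finrank_eq_card_chooseBasisIndex, RingOfIntegers.rank, hdeg]
  let g := Fintype.equivFinOfCardEq hcardO
  let e : Module.Basis (Fin 2) ℤ (𝓞 K) := (RingOfIntegers.basis K).reindex g
  let Bint : Module.Basis (Fin 2) ℚ K := (integralBasis K).reindex g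
  have hBint_e : ∀ i, Bint i = algebraMap (𝓞 K) K (e i) := by
    intro i
    simp only [Bint, e, Module.Basis.reindex_apply, integralBasis_apply]
  have hdiscBint : Algebra.discr ℚ ⇑Bint = ((NumberField.discr K : ℤ) : ℚ) := by
    rw [show ⇑Bint = ⇑(integralBasis K) ∘ ⇑g.symm from Module.Basis.coe_reindex _ _,
      Algebra.discr_reindex, ← coe_discr]
  let vO : Fin 2 → 𝓞 K := ![θO, 1]
  let M : Matrix (Fin 2) (Fin 2) ℤ := e.toMatrix vO
  have hvec : (Matrix.vecMul ⇑Bint ((M.map (Int.cast : ℤ → ℚ)).map (algebraMap ℚ K))) =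
      fun i => algebraMap (𝓞 K) K (vO i) := by
    have hO := Module.Basis.toMatrix_map_vecMul e vO
    funext i
    have h1 := congrArg (algebraMap (𝓞 K) K) (congrFun hO i)
    rw [← h1]
    simp only [Matrix.vecMul, dotProduct, Matrix.map_apply, map_sum, map_mul, hBint_e]
    congr 1
    funext j
    congr 1
    rw [map_intCast, ← IsScalarTower.algebraMap_apply ℤ (𝓞 K) K, eq_intCast]
  have hcoevO : (fun i => algebraMap (𝓞 K) K (vO i)) = ![θ, (1 : K)] := by
    funext i
    fin_cases i <;> simp [vO, hcoeθ]
  have hdet2 : M.det ^ 2 = 1 := by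
    have h1 : Algebra.discr ℚ (fun i => algebraMap (𝓞 K) K (vO i)) =
        ((M.map (Int.cast : ℤ → ℚ)).det) ^ 2 * Algebra.discr ℚ ⇑Bint := by
      rw [← hvec]
      exact Algebra.discr_of_matrix_vecMul ⇑Bint (M.map (Int.cast : ℤ → ℚ))
    have hdm : (M.map (Int.cast : ℤ → ℚ)).det = ((M.det : ℤ) : ℚ) := by
      rw [show M.map (Int.cast : ℤ → ℚ) = (Int.castRingHom ℚ).mapMatrix M from rfl,
        ← RingHom.map_det]
      rfl
    rw [hcoevO, hdiscr_pair, hdiscBint, hdm] at h1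
    have hd : ((NumberField.discr K : ℤ) : ℚ) ≠ 0 := by
      exact_mod_cast (show (NumberField.discr K : ℤ) ≠ 0 from ne_of_lt hneg)
    have h2 : ((b : ℚ) ^ 2 - 4 * (a : ℚ) * (c : ℚ)) = ((NumberField.discr K : ℤ) : ℚ) := by
      exact_mod_cast congrArg (fun z : ℤ => (z : ℚ)) hdisc
    rw [h2] at h1
    have h3 : ((M.det : ℚ)) ^ 2 = 1 := by
      have h4 : (1 : ℚ) * ((NumberField.discr K : ℤ) : ℚ) =
          ((M.det : ℚ)) ^ 2 * ((NumberField.discr K : ℤ) : ℚ) := by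
        rw [one_mul]; exact h1
      exact (mul_right_cancel₀ hd h4).symm
    exact_mod_cast h3
  have hunit : IsUnit (e.det vO) := by
    rw [Module.Basis.det_apply]
    exact IsUnit.of_mul_eq_one M.det (by rw [← pow_two]; exact hdet2)
  obtain ⟨hliO, hspO⟩ := (Module.Basis.is_basis_iff_det e).mpr hunit
  let bO : Module.Basis (Fin 2) ℤ (𝓞 K) := Module.Basis.mk hliO hspO.ge
  have hbO : ⇑bO = vO := Module.Basis.coe_mk _ _
  have hbO0 : bO 0 = θO := by rw [hbO]; rfl
  have hbO1 : bO 1 = 1 := by rw [hbO]; rfl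
  have hreprO : ∀ (p q : ℤ) (i : Fin 2), bO.repr (p • θO + q • (1 : 𝓞 K)) i = ![p, q] i := by
    intro p q i
    rw [← hbO0, ← hbO1, map_add, map_smul, map_smul, bO.repr_self, bO.repr_self]
    fin_cases i <;> simp
  -- the quadratic relation in 𝓞 K
  have hθOmul : θO * θO = (-b) • θO + (-c) • ((a : ℤ) : 𝓞 K) := by
    have hK : θ * θ = (-b : ℤ) • θ + (-c : ℤ) • ((a : K)) := by
      rw [zsmul_eq_mul, zsmul_eq_mul]
      push_cast
      linear_combination hθeq
    apply RingOfIntegers.ext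
    show (algebraMap (𝓞 K) K) (θO * θO) =
      (algebraMap (𝓞 K) K) ((-b) • θO + (-c) • ((a : ℤ) : 𝓞 K))
    rw [map_mul, map_add, map_zsmul, map_zsmul, map_intCast, hcoeθ]
    exact hK
  -- the span
  set S : Submodule ℤ (𝓞 K) :=
    Submodule.span ℤ ({θO, ((a : ℤ) : 𝓞 K)} : Set (𝓞 K)) with hSdef
  have hθO_S : θO ∈ S := Submodule.subset_span (by left; rfl)
  have haO_S : ((a : ℤ) : 𝓞 K) ∈ S := Submodule.subset_span (by right; rfl)
  have hSmulθ : ∀ x ∈ S, θO * x ∈ S := by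
    intro x hx
    induction hx using Submodule.span_induction with
    | mem y hy =>
      rcases hy with rfl | rfl
      · rw [hθOmul]
        exact Submodule.add_mem _ (Submodule.smul_mem _ _ hθO_S) (Submodule.smul_mem _ _ haO_S)
      · rw [show θO * ((a : ℤ) : 𝓞 K) = a • θO by rw [zsmul_eq_mul]; ring]
        exact Submodule.smul_mem _ _ hθO_S
    | zero => rw [mul_zero]; exact Submodule.zero_mem _
    | add y z hy hz hy' hz' => rw [mul_add]; exact Submodule.add_mem _ hy' hz'
    | smul r y hy hy' => rw [mul_smul_comm]; exact Submodule.smul_mem _ _ hy'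
  have hSmul : ∀ (r : 𝓞 K), ∀ x ∈ S, r * x ∈ S := by
    intro r x hx
    have hr : bO.repr r 0 • θO + bO.repr r 1 • (1 : 𝓞 K) = r := by
      have := Module.Basis.sum_repr bO r
      rwa [Fin.sum_univ_two, hbO0, hbO1] at this
    rw [← hr, add_mul, smul_mul_assoc, smul_mul_assoc, one_mul]
    exact Submodule.add_mem _ (Submodule.smul_mem _ _ (hSmulθ x hx)) (Submodule.smul_mem _ _ hx)
  set J : Ideal (𝓞 K) := Ideal.span {θO, ((a : ℤ) : 𝓞 K)} with hJdef
  have hJS : ∀ z : 𝓞 K, z ∈ J ↔ z ∈ S := by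
    intro z
    constructor
    · intro hz
      induction hz using Submodule.span_induction with
      | mem y hy =>
        rcases hy with rfl | rfl
        · exact hθO_S
        · exact haO_S
      | zero => exact Submodule.zero_mem _
      | add y z hy hz hy' hz' => exact Submodule.add_mem _ hy' hz'
      | smul r y hy hy' => rw [smul_eq_mul]; exact hSmul r y hy'
    · intro hz
      induction hz using Submodule.span_induction with
      | mem y hy =>
        rcases hy with rfl | rfl
        · exact Ideal.subset_span (by left; rfl)
        · exact Ideal.subset_span (by right; rfl)
      | zero => exact Submodule.zero_mem _
      | add y z hy hz hy' hz' => exact Submodule.add_mem _ hy' hz'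
      | smul r y hy hy' => exact zsmul_mem hy' r
  -- linear independence of (θO, a)
  have hu_li : LinearIndependent ℤ ![θO, ((a : ℤ) : 𝓞 K)] := by
    rw [Fintype.linearIndependent_iff]
    intro gc hgc
    have h1 : gc 0 • θO + (gc 1 * a) • (1 : 𝓞 K) = 0 := by
      rw [Fin.sum_univ_two] at hgc
      simp only [Matrix.cons_val_zero, Matrix.cons_val_one, Matrix.head_cons] at hgc
      rw [← hgc]
      rw [zsmul_eq_mul, zsmul_eq_mul, zsmul_eq_mul]
      push_cast
      ring
    have h2 : ∀ i, bO.repr (gc 0 • θO + (gc 1 * a) • (1 : 𝓞 K)) i = ![gc 0, gc 1 * a] i :=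
      hreprO _ _
    rw [h1] at h2
    have h20 := h2 0
    have h21 := h2 1
    simp only [map_zero, Finsupp.coe_zero, Pi.zero_apply, Matrix.cons_val_zero,
      Matrix.cons_val_one, Matrix.head_cons] at h20 h21
    intro i
    fin_cases i
    · exact h20.symm
    · have := h21.symm
      rcases mul_eq_zero.mp this with h | h
      · exact h
      · exact absurd h hpos.ne'
  -- basis of J
  have hθO_J : θO ∈ J := Ideal.subset_span (by left; rfl)
  have haO_J : ((a : ℤ) : 𝓞 K) ∈ J := Ideal.subset_span (by right; rfl)
  let w : Fin 2 → J := ![⟨θO, hθO_J⟩, ⟨((a : ℤ) : 𝓞 K), haO_J⟩]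
  have hw_comp : (J.subtype.restrictScalars ℤ) ∘ w = ![θO, ((a : ℤ) : 𝓞 K)] := by
    funext i; fin_cases i <;> rfl
  have hw_li : LinearIndependent ℤ w := by
    apply LinearIndependent.of_comp (J.subtype.restrictScalars ℤ)
    rw [hw_comp]
    exact hu_li
  have hw_span : Submodule.span ℤ (Set.range w) = ⊤ := by
    apply Submodule.map_injective_of_injective
      (show Function.Injective (J.subtype.restrictScalars ℤ) from Subtype.coe_injective)
    rw [Submodule.map_span, Submodule.map_top]
    have hrange : LinearMap.range (J.subtype.restrictScalars ℤ) = J.restrictScalars ℤ := by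
      ext x
      constructor
      · rintro ⟨y, rfl⟩; exact y.2
      · intro hx; exact ⟨⟨x, hx⟩, rfl⟩
    have him2 : (J.subtype.restrictScalars ℤ) '' Set.range w =
        ({θO, ((a : ℤ) : 𝓞 K)} : Set (𝓞 K)) := by
      ext z
      simp only [Set.mem_image, Set.mem_range, Set.mem_insert_iff, Set.mem_singleton_iff]
      constructor
      · rintro ⟨y, ⟨i, rfl⟩, rfl⟩
        fin_cases i
        · left; rfl
        · right; rfl
      · rintro (rfl | rfl)
        · exact ⟨w 0, ⟨0, rfl⟩, rfl⟩
        · exact ⟨w 1, ⟨1, rfl⟩, rfl⟩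
    rw [hrange, him2]
    ext z
    rw [Submodule.restrictScalars_mem]
    exact (hJS z).symm
  let bJ : Module.Basis (Fin 2) ℤ J := Module.Basis.mk hw_li hw_span.ge
  have hbJ : ⇑bJ = w := Module.Basis.coe_mk _ _
  -- norm of J
  have habsJ : Ideal.absNorm J = a.natAbs := by
    have hcomp : ((Subtype.val : J → 𝓞 K) ∘ ⇑bJ) = ![θO, ((a : ℤ) : 𝓞 K)] := by
      funext i
      rw [hbJ]
      fin_cases i <;> rfl
    have hu0 : (![θO, ((a : ℤ) : 𝓞 K)] : Fin 2 → 𝓞 K) 0 =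
        (1 : ℤ) • θO + (0 : ℤ) • (1 : 𝓞 K) := by simp
    have hu1 : (![θO, ((a : ℤ) : 𝓞 K)] : Fin 2 → 𝓞 K) 1 =
        (0 : ℤ) • θO + a • (1 : 𝓞 K) := by simp [zsmul_eq_mul]
    rw [← Ideal.natAbs_det_basis_change bO J bJ, Module.Basis.det_apply, hcomp, Matrix.det_fin_two,
      Module.Basis.toMatrix_apply, Module.Basis.toMatrix_apply, Module.Basis.toMatrix_apply, Module.Basis.toMatrix_apply,
      hu0, hu1, hreprO, hreprO, hreprO, hreprO]
    simp
  -- the fractional ideal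
  refine ⟨FractionalIdeal.spanSingleton (𝓞 K)⁰ ((a : K))⁻¹ * (J : FractionalIdeal (𝓞 K)⁰ K),
    ?_, ?_⟩
  · ext x
    simp only [SetLike.mem_coe, FractionalIdeal.mem_coe]
    rw [FractionalIdeal.mem_singleton_mul]
    constructor
    · rintro ⟨y, hy, rfl⟩
      rw [FractionalIdeal.mem_coeIdeal] at hy
      obtain ⟨z, hz, rfl⟩ := hy
      obtain ⟨m, n, rfl⟩ := Submodule.mem_span_pair.mp ((hJS z).mp hz)
      rw [Submodule.mem_span_pair]
      refine ⟨m, n, ?_⟩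
      have h1 : (a : K) * ((m : ℤ) • ω + (n : ℤ) • (1 : K)) =
          algebraMap (𝓞 K) K (m • θO + n • ((a : ℤ) : 𝓞 K)) := by
        push_cast [map_add, map_zsmul, map_intCast, hcoeθ, hθdef]
        rw [zsmul_eq_mul, zsmul_eq_mul, zsmul_eq_mul, zsmul_eq_mul]
        push_cast
        ring
      rw [← h1, inv_mul_cancel_left₀ haK]
    · intro hx
      obtain ⟨m, n, rfl⟩ := Submodule.mem_span_pair.mp hx
      refine ⟨algebraMap (𝓞 K) K (m • θO + n • ((a : ℤ) : 𝓞 K)), ?_, ?_⟩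
      · rw [FractionalIdeal.mem_coeIdeal]
        exact ⟨_, (hJS _).mpr (Submodule.mem_span_pair.mpr ⟨m, n, rfl⟩), rfl⟩
      · have h1 : (a : K) * ((m : ℤ) • ω + (n : ℤ) • (1 : K)) =
            algebraMap (𝓞 K) K (m • θO + n • ((a : ℤ) : 𝓞 K)) := by
          push_cast [map_add, map_zsmul, map_intCast, hcoeθ, hθdef]
          rw [zsmul_eq_mul, zsmul_eq_mul, zsmul_eq_mul, zsmul_eq_mul]
          push_cast
          ring
        rw [← h1, inv_mul_cancel_left₀ haK]
  · rw [map_mul, FractionalIdeal.absNorm_span_singleton, FractionalIdeal.coeIdeal_absNorm,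
      habsJ]
    have h1 : ((a : K))⁻¹ = algebraMap ℚ K ((a : ℚ)⁻¹) := by
      rw [map_inv₀, map_intCast]
    rw [h1, Algebra.norm_algebraMap, hdeg]
    have ha : (0 : ℚ) < (a : ℚ) := by exact_mod_cast hpos
    rw [abs_of_pos (by positivity)]
    rw [show ((a.natAbs : ℕ) : ℚ) = (a : ℚ) from by rw [Nat.cast_natAbs]; exact_mod_cast abs_of_pos hpos]
    field_simp
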